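/- Let V^{π̃,k} denote k applications of the Bellman operator for policy π̃ starting from the zero function, and V^{*,k} the k-step optimal value (k applications of the Bellman optimality operator from zero). If for every state s the one-step suboptimality of π̃ is bounded: V^{*,k}(s) - Q^{*,k}(s,π̃(s)) ≤ c for all k and s, then for all k and s: V^{π̃,k}(s) ≥ V^{*,k}(s) - Σ_{τ=0}^{k} γ^τ c. -/
import Mathlib


/-- Finite-horizon induction step: if the one-step suboptimality of `π̃` is
bounded by `c` at each horizon, the `k`-horizon value of `π̃` is within
`∑_{τ=0}^{k} γ^τ c` of the `k`-horizon optimal value. -/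
theorem finite_horizon_policy_bound
    {S A : Type*} [Fintype S] [Fintype A] [Nonempty A]
    (P : S → A → S → ℝ) (R : S → A → ℝ) (γ c : ℝ)
    (hγ0 : 0 ≤ γ) (hγ1 : γ < 1) (hc : 0 ≤ c)
    (hP0 : ∀ s a s', 0 ≤ P s a s') (hP1 : ∀ s a, ∑ s', P s a s' = 1)
    (π : S → A)
    (Vπ : ℕ → S → ℝ) (Vstar : ℕ → S → ℝ) (Qstar : ℕ → S → A → ℝ)
    (hVπ0 : ∀ s, Vπ 0 s = R s (π s))
    (hVstar0 : ∀ s, Vstar 0 s =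
      Finset.univ.sup' Finset.univ_nonempty (fun a => R s a))
    (hVπrec : ∀ k s, Vπ (k + 1) s =
      R s (π s) + γ * ∑ s', P s (π s) s' * Vπ k s')
    (hQstar : ∀ k s a, Qstar (k + 1) s a =
      R s a + γ * ∑ s', P s a s' * Vstar k s')
    (hVstarrec : ∀ k s, Vstar (k + 1) s =
      Finset.univ.sup' Finset.univ_nonempty (fun a => Qstar (k + 1) s a))
    (hQstar0 : ∀ s a, Qstar 0 s a = R s a)
    (hπ : ∀ k s, Vstar k s - Qstar k s (π s) ≤ c) :
    ∀ k s, Vπ k s ≥ Vstar k s - (∑ τ ∈ Finset.range (k + 1), γ ^ τ) * c := by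
  intro k
  induction k with
  | zero =>
    intro s
    have h1 := hπ 0 s
    rw [hQstar0] at h1
    have := hVπ0 s
    have hs1 : (∑ τ ∈ Finset.range (0 + 1), γ ^ τ) = 1 := by simp
    rw [hs1]
    linarith
  | succ k ih =>
    intro s
    have hsum : ∑ s', P s (π s) s' * Vπ k s' ≥
        ∑ s', P s (π s) s' * (Vstar k s' - (∑ τ ∈ Finset.range (k + 1), γ ^ τ) * c) := by
      apply Finset.sum_le_sum
      intro s' _
      exact mul_le_mul_of_nonneg_left (ih s') (hP0 s (π s) s')
    have hexp : ∑ s', P s (π s) s' * (Vstar k s' - (∑ τ ∈ Finset.range (k + 1), γ ^ τ) * c)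
        = (∑ s', P s (π s) s' * Vstar k s') - (∑ τ ∈ Finset.range (k + 1), γ ^ τ) * c := by
      simp only [mul_sub]
      rw [Finset.sum_sub_distrib, ← Finset.sum_mul, hP1, one_mul]
    have hQ := hQstar k s (π s)
    have hπ1 := hπ (k + 1) s
    have hV := hVπrec k s
    have hgeo : (∑ τ ∈ Finset.range (k + 2), γ ^ τ) = 1 + γ * ∑ τ ∈ Finset.range (k + 1), γ ^ τ := by
      rw [Finset.sum_range_succ']
      simp only [pow_zero, pow_succ']
      rw [← Finset.mul_sum]
      ring
    have key : Vπ (k + 1) s ≥ Qstar (k + 1) s (π s) - γ * ((∑ τ ∈ Finset.range (k + 1), γ ^ τ) * c) := by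
      rw [hV, hQ]
      have := mul_le_mul_of_nonneg_left (le_of_eq hexp.symm |>.trans hsum) hγ0
      linarith
    rw [hgeo]
    have hg0 : 0 ≤ ∑ τ ∈ Finset.range (k + 1), γ ^ τ :=
      Finset.sum_nonneg fun i _ => pow_nonneg hγ0 i
    nlinarith [key, hπ1]
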